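/- Let (R, m) be a Noetherian local ring with finite residue field of cardinality q, and let c₁, ..., c_q be a set of representatives of the residue classes of m. Then the set of polynomials in R[x] mapping R into m equals the ideal generated by π(x) = ∏ᵢ(x - cᵢ) and the constants in m, i.e., Z(R, m) = (π(x)) + m·R[x]. -/

import Mathlib

open Polynomial IsLocalRing

/-- The ideal of polynomials in `R[X]` mapping every element of `S` into the ideal `I`. -/
def zeroFunctionsInto {R : Type*} [CommRing R] (S : Set R) (I : Ideal R) : Ideal R[X] where
  carrier := {f | ∀ s ∈ S, f.eval s ∈ I}
  add_mem' := fun hf hg s hs => by simpa using I.add_mem (hf s hs) (hg s hs)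
  zero_mem' := fun s _ => by simp
  smul_mem' := fun c f hf s hs => by simpa using I.mul_mem_left (c.eval s) (hf s hs)

/-- The ideal of polynomials vanishing on the subset `S`. -/
def zeroFunctions {R : Type*} [CommRing R] (S : Set R) : Ideal R[X] :=
  zeroFunctionsInto S ⊥

lemma mem_zeroFunctionsInto {R : Type*} [CommRing R] {S : Set R} {I : Ideal R} {f : R[X]} :
    f ∈ zeroFunctionsInto S I ↔ ∀ s ∈ S, f.eval s ∈ I := Iff.rfl

theorem statement_1 {R : Type*} [CommRing R] [IsNoetherianRing R] [IsLocalRing R]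
    (q : ℕ) (c : Fin q → R) (hc : Function.Bijective (fun i => residue R (c i))) :
    zeroFunctionsInto (Set.univ : Set R) (maximalIdeal R) =
      Ideal.span {∏ i, (X - C (c i))} ⊔ (maximalIdeal R).map (C : R →+* R[X]) := by
  set π : R[X] := ∏ i, (X - C (c i)) with hπ
  have hmonic : π.Monic := monic_prod_of_monic _ _ fun i _ => monic_X_sub_C (c i)
  have hdeg : π.natDegree = q := by
    rw [hπ, natDegree_prod_of_monic _ _ fun i _ => monic_X_sub_C (c i)]
    simp [natDegree_X_sub_C]
  apply le_antisymm
  · -- hard direction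
    intro f hf
    have hq : 0 < q := by
      obtain ⟨i, -⟩ := hc.2 (residue R 0)
      exact i.pos
    set r : R[X] := f %ₘ π with hr
    set g : R[X] := f /ₘ π with hg
    have hfeq : f = π * g + r := by
      rw [hr, hg, add_comm, modByMonic_add_div f π]
    -- evaluate r at c i : it lies in m
    have hπc : ∀ i, π.eval (c i) = 0 := by
      intro i
      rw [hπ, eval_prod]
      exact Finset.prod_eq_zero (Finset.mem_univ i) (by simp)
    have hrc : ∀ i, r.eval (c i) ∈ maximalIdeal R := by
      intro i
      have : r.eval (c i) = f.eval (c i) - π.eval (c i) * g.eval (c i) := by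
        rw [hfeq]; simp
      rw [this, hπc i]
      simpa using hf (c i) (Set.mem_univ _)
    -- the reduction of r mod m is zero
    have hrbar : r.map (residue R) = 0 := by
      apply eq_zero_of_natDegree_lt_card_of_eval_eq_zero _ hc.1
      · intro i
        have : (r.map (residue R)).eval (residue R (c i)) = residue R (r.eval (c i)) := by
          rw [eval_map, eval₂_at_apply]
        rw [this]
        exact Ideal.Quotient.eq_zero_iff_mem.mpr (hrc i)
      · rw [Fintype.card_fin]
        rcases eq_or_ne r 0 with h0 | h0
        · simpa [h0] using hq
        · calc (r.map (residue R)).natDegree ≤ r.natDegree := natDegree_map_le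
            _ < q := by
              have := degree_modByMonic_lt f hmonic
              rw [← hr] at this
              have := natDegree_lt_natDegree h0 this
              rwa [hdeg] at this
    have hrmem : r ∈ (maximalIdeal R).map (C : R →+* R[X]) := by
      rw [Ideal.mem_map_C_iff]
      intro n
      have h2 : residue R (r.coeff n) = 0 := by
        rw [← coeff_map, hrbar, coeff_zero]
      exact Ideal.Quotient.eq_zero_iff_mem.mp h2
    rw [hfeq]
    exact Ideal.add_mem _
      (Ideal.mem_sup_left (Ideal.mem_span_singleton.mpr ⟨g, rfl⟩))
      (Ideal.mem_sup_right hrmem)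
  · apply sup_le
    · rw [Ideal.span_le, Set.singleton_subset_iff]
      intro s _
      rw [← Ideal.Quotient.eq_zero_iff_mem]
      show residue R (π.eval s) = 0
      obtain ⟨i, hi⟩ := hc.2 (residue R s)
      have : residue R (π.eval s) = (π.map (residue R)).eval (residue R s) := by
        rw [eval_map, eval₂_at_apply]
      rw [this, hπ, Polynomial.map_prod, eval_prod]
      apply Finset.prod_eq_zero (Finset.mem_univ i)
      simp [hi]
    · rw [Ideal.map_le_iff_le_comap]
      intro a ha s _
      simpa using ha
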